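/- Suppose q > μ and fix ε₁ ∈ ℝ. Set β := γ₂ − γ₁ and y := 1/β. For all real x, s with x ≥ ε₁ and ε₁ < s ≤ ε₁ + k*, define I₁ := ∫_{β(s−ε₁)}^{βk*} e^{u(1+y)}/(e^u − 1) du and I₂ := ∫_{β(s−ε₁)}^{βk*} e^{uy}/(e^u − 1) du. Then e^s · Z(x − ε₁) + e^{ε₁} · W(x − ε₁) · ∫_{s−ε₁}^{k*} e^t · Z(t)/W(t) dt = (e^{ε₁}/β) · ( e^{γ₂(x−ε₁)} · (I₂ − γ₁ e^{k*}) − e^{γ₁(x−ε₁)} · (I₁ − γ₂ e^{k*}) ). (This is the closed form of the value function U_{ε₁,∞} on the region C_I* ∪ D_I* in the problem with a lower cap and no upper cap.) -/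

import Mathlib

open Real Filter Set MeasureTheory

noncomputable def dlt (σ μ q : ℝ) : ℝ := Real.sqrt ((μ / σ ^ 2 - 1 / 2) ^ 2 + 2 * q / σ ^ 2)

noncomputable def gma (σ μ : ℝ) : ℝ := 1 / 2 - μ / σ ^ 2

noncomputable def gma1 (σ μ q : ℝ) : ℝ := gma σ μ - dlt σ μ q

noncomputable def gma2 (σ μ q : ℝ) : ℝ := gma σ μ + dlt σ μ q

/-- The scale function `W^{(q)}` of `X_t = (μ - σ²/2) t + σ B_t`. -/
noncomputable def W (σ μ q : ℝ) (x : ℝ) : ℝ :=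
  if 0 ≤ x then 2 / (σ ^ 2 * dlt σ μ q) * Real.exp (gma σ μ * x) * Real.sinh (dlt σ μ q * x)
  else 0

/-- The scale function `Z^{(q)}` of `X_t = (μ - σ²/2) t + σ B_t`. -/
noncomputable def Z (σ μ q : ℝ) (x : ℝ) : ℝ :=
  if 0 ≤ x then
    Real.exp (gma σ μ * x) * Real.cosh (dlt σ μ q * x)
      - gma σ μ / dlt σ μ q * Real.exp (gma σ μ * x) * Real.sinh (dlt σ μ q * x)
  else 1

/-- `k* = (γ₂ - γ₁)⁻¹ log((1 - 1/γ₁)/(1 - 1/γ₂))`. -/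
noncomputable def kstar (σ μ q : ℝ) : ℝ :=
  (gma2 σ μ q - gma1 σ μ q)⁻¹ *
    Real.log ((1 - 1 / gma1 σ μ q) / (1 - 1 / gma2 σ μ q))

open intervalIntegral in
lemma my_integral_exp (a b : ℝ) : (∫ t in a..b, Real.exp t) = Real.exp b - Real.exp a := integral_exp
open intervalIntegral in
lemma my_intervalIntegrable_exp (a b : ℝ) : IntervalIntegrable Real.exp MeasureTheory.volume a b := intervalIntegrable_exp

lemma dlt_pos (σ μ q : ℝ) (hσ : 0 < σ) (hq : 0 < q) : 0 < dlt σ μ q := by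
  unfold dlt; apply Real.sqrt_pos.2; positivity

lemma dlt_sq (σ μ q : ℝ) (hσ : 0 < σ) (hq : 0 < q) :
    dlt σ μ q ^ 2 = (μ / σ ^ 2 - 1 / 2) ^ 2 + 2 * q / σ ^ 2 := by
  unfold dlt; rw [Real.sq_sqrt]; positivity

lemma gma1_lt_gma2 (σ μ q : ℝ) (hσ : 0 < σ) (hq : 0 < q) : gma1 σ μ q < gma2 σ μ q := by
  have := dlt_pos σ μ q hσ hq
  unfold gma1 gma2; linarith

lemma W_val (σ μ q : ℝ) (hσ : 0 < σ) (hq : 0 < q) {t : ℝ} (ht : 0 ≤ t) :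
    W σ μ q t = (Real.exp (gma2 σ μ q * t) - Real.exp (gma1 σ μ q * t)) / (σ ^ 2 * dlt σ μ q) := by
  have hδ := dlt_pos σ μ q hσ hq
  rw [W, if_pos ht, Real.sinh_eq]
  rw [show gma2 σ μ q * t = gma σ μ * t + dlt σ μ q * t by unfold gma2; ring,
      show gma1 σ μ q * t = gma σ μ * t + -(dlt σ μ q * t) by unfold gma1; ring,
      Real.exp_add, Real.exp_add]
  field_simp

lemma Z_val (σ μ q : ℝ) (hσ : 0 < σ) (hq : 0 < q) {t : ℝ} (ht : 0 ≤ t) :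
    Z σ μ q t = (gma2 σ μ q * Real.exp (gma1 σ μ q * t) - gma1 σ μ q * Real.exp (gma2 σ μ q * t))
      / (gma2 σ μ q - gma1 σ μ q) := by
  have hδ := dlt_pos σ μ q hσ hq
  rw [Z, if_pos ht, Real.sinh_eq, Real.cosh_eq]
  rw [show gma2 σ μ q * t = gma σ μ * t + dlt σ μ q * t by unfold gma2; ring,
      show gma1 σ μ q * t = gma σ μ * t + -(dlt σ μ q * t) by unfold gma1; ring,
      Real.exp_add, Real.exp_add]
  rw [show gma2 σ μ q - gma1 σ μ q = 2 * dlt σ μ q by unfold gma1 gma2; ring]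
  unfold gma1 gma2
  field_simp
  ring

lemma key (σ μ q : ℝ) (hσ : 0 < σ) (hq : 0 < q) {X t : ℝ} (hX : 0 ≤ X) (ht : 0 < t) :
    W σ μ q X * (Real.exp t * Z σ μ q t / W σ μ q t)
      = Real.exp (gma2 σ μ q * X) * (Real.exp t / (Real.exp ((gma2 σ μ q - gma1 σ μ q) * t) - 1))
        - Real.exp (gma1 σ μ q * X) *
            (Real.exp (t * (1 + (gma2 σ μ q - gma1 σ μ q))) / (Real.exp ((gma2 σ μ q - gma1 σ μ q) * t) - 1))
        + Real.exp t * Z σ μ q X := by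
  have hδ := dlt_pos σ μ q hσ hq
  have hg := gma1_lt_gma2 σ μ q hσ hq
  have hβ : (0:ℝ) < gma2 σ μ q - gma1 σ μ q := by linarith
  have hne : Real.exp (gma2 σ μ q * t) - Real.exp (gma1 σ μ q * t) ≠ 0 := by
    have : Real.exp (gma1 σ μ q * t) < Real.exp (gma2 σ μ q * t) :=
      Real.exp_lt_exp.2 (by nlinarith)
    linarith
  have hE : Real.exp ((gma2 σ μ q - gma1 σ μ q) * t) - 1 ≠ 0 := by
    have : (1:ℝ) < Real.exp ((gma2 σ μ q - gma1 σ μ q) * t) :=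
      Real.one_lt_exp_iff.2 (by positivity)
    linarith
  rw [W_val σ μ q hσ hq hX, W_val σ μ q hσ hq ht.le, Z_val σ μ q hσ hq hX,
      Z_val σ μ q hσ hq ht.le,
      show (gma2 σ μ q - gma1 σ μ q) * t = gma2 σ μ q * t - gma1 σ μ q * t by ring,
      show t * (1 + (gma2 σ μ q - gma1 σ μ q)) = t + (gma2 σ μ q * t - gma1 σ μ q * t) by ring,
      Real.exp_sub, Real.exp_add, Real.exp_sub]
  have h1 : Real.exp (gma1 σ μ q * t) ≠ 0 := (Real.exp_pos _).ne'
  have h2 : σ ^ 2 * dlt σ μ q ≠ 0 := by positivity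
  have hE' : Real.exp (gma2 σ μ q * t) / Real.exp (gma1 σ μ q * t) - 1 ≠ 0 := by
    rw [← Real.exp_sub, ← sub_mul]
    exact hE
  rw [div_sub' h1] at hE' ⊢
  field_simp
  ring

theorem stmt_19 (σ μ q ε₁ : ℝ) (hσ : 0 < σ) (hq : 0 < q) (hqμ : μ < q)
    (x s : ℝ) (hx : ε₁ ≤ x) (hs₁ : ε₁ < s) (hs₂ : s ≤ ε₁ + kstar σ μ q) :
    Real.exp s * Z σ μ q (x - ε₁)
      + Real.exp ε₁ * W σ μ q (x - ε₁) *
          ∫ t in (s - ε₁)..(kstar σ μ q), Real.exp t * Z σ μ q t / W σ μ q t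
      = Real.exp ε₁ / (gma2 σ μ q - gma1 σ μ q) *
          (Real.exp (gma2 σ μ q * (x - ε₁)) *
            ((∫ u in ((gma2 σ μ q - gma1 σ μ q) * (s - ε₁))..
                ((gma2 σ μ q - gma1 σ μ q) * kstar σ μ q),
                Real.exp (u * (1 / (gma2 σ μ q - gma1 σ μ q))) / (Real.exp u - 1))
              - gma1 σ μ q * Real.exp (kstar σ μ q))
          - Real.exp (gma1 σ μ q * (x - ε₁)) *
            ((∫ u in ((gma2 σ μ q - gma1 σ μ q) * (s - ε₁))..
                ((gma2 σ μ q - gma1 σ μ q) * kstar σ μ q),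
                Real.exp (u * (1 + 1 / (gma2 σ μ q - gma1 σ μ q))) / (Real.exp u - 1))
              - gma2 σ μ q * Real.exp (kstar σ μ q))) := by
  have hδ := dlt_pos σ μ q hσ hq
  have hg := gma1_lt_gma2 σ μ q hσ hq
  set g1 := gma1 σ μ q with hg1def
  set g2 := gma2 σ μ q with hg2def
  set β := g2 - g1 with hβdef
  have hβ : (0:ℝ) < β := by simp [hβdef]; linarith
  set a := s - ε₁ with hadef
  set b := kstar σ μ q with hbdef
  set X := x - ε₁ with hXdef
  have ha : 0 < a := by simp [hadef]; linarith
  have hab : a ≤ b := by simp [hadef]; linarith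
  have hX : 0 ≤ X := by simp [hXdef]; linarith
  -- nonvanishing of denominator on the interval
  have hEne : ∀ t ∈ Icc a b, Real.exp (β * t) - 1 ≠ 0 := by
    intro t htm
    have : (1:ℝ) < Real.exp (β * t) :=
      Real.one_lt_exp_iff.2 (mul_pos hβ (lt_of_lt_of_le ha htm.1))
    linarith
  -- integrability
  have hcont : ContinuousOn (fun t : ℝ => Real.exp (β * t) - 1) (Icc a b) := by fun_prop
  have i1 : IntervalIntegrable (fun t => Real.exp t / (Real.exp (β * t) - 1)) volume a b := by
    apply ContinuousOn.intervalIntegrable_of_Icc hab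
    exact (Real.continuous_exp.continuousOn).div hcont hEne
  have i2 : IntervalIntegrable (fun t => Real.exp (t * (1 + β)) / (Real.exp (β * t) - 1))
      volume a b := by
    apply ContinuousOn.intervalIntegrable_of_Icc hab
    exact ((Real.continuous_exp.comp (continuous_id.mul continuous_const)).continuousOn).div
      hcont hEne
  -- step 1: the main integral identity
  have hsplit : W σ μ q X * ∫ t in a..b, Real.exp t * Z σ μ q t / W σ μ q t
      = Real.exp (g2 * X) * (∫ t in a..b, Real.exp t / (Real.exp (β * t) - 1))
        - Real.exp (g1 * X) * (∫ t in a..b, Real.exp (t * (1 + β)) / (Real.exp (β * t) - 1))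
        + (Real.exp b - Real.exp a) * Z σ μ q X := by
    rw [← intervalIntegral.integral_const_mul]
    rw [intervalIntegral.integral_congr (g := fun t =>
        Real.exp (g2 * X) * (Real.exp t / (Real.exp (β * t) - 1))
        - Real.exp (g1 * X) * (Real.exp (t * (1 + β)) / (Real.exp (β * t) - 1))
        + Real.exp t * Z σ μ q X)
      (by
        intro t htm
        rw [uIcc_of_le hab] at htm
        have ht : 0 < t := lt_of_lt_of_le ha htm.1
        exact key σ μ q hσ hq hX ht)]
    rw [intervalIntegral.integral_add (((i1.const_mul _).sub (i2.const_mul _)))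
        (((my_intervalIntegrable_exp a b).mul_const _)),
      intervalIntegral.integral_sub (i1.const_mul _) (i2.const_mul _),
      intervalIntegral.integral_const_mul, intervalIntegral.integral_const_mul,
      intervalIntegral.integral_mul_const, my_integral_exp a b]
  -- step 2: change of variables for the two RHS integrals
  have hI2 : (∫ u in (β * a)..(β * b), Real.exp (u * (1 / β)) / (Real.exp u - 1))
      = β * ∫ t in a..b, Real.exp t / (Real.exp (β * t) - 1) := by
    rw [← intervalIntegral.smul_integral_comp_mul_left
      (fun u => Real.exp (u * (1 / β)) / (Real.exp u - 1)) β, smul_eq_mul]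
    congr 1
    apply intervalIntegral.integral_congr
    intro t _
    beta_reduce
    rw [show β * t * (1 / β) = t by field_simp]
  have hI1 : (∫ u in (β * a)..(β * b), Real.exp (u * (1 + 1 / β)) / (Real.exp u - 1))
      = β * ∫ t in a..b, Real.exp (t * (1 + β)) / (Real.exp (β * t) - 1) := by
    rw [← intervalIntegral.smul_integral_comp_mul_left
      (fun u => Real.exp (u * (1 + 1 / β)) / (Real.exp u - 1)) β, smul_eq_mul]
    congr 1
    apply intervalIntegral.integral_congr
    intro t _
    beta_reduce
    rw [show β * t * (1 + 1 / β) = t * (1 + β) by field_simp; ring]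
  -- final assembly
  rw [hI1, hI2, mul_assoc, hsplit, Z_val σ μ q hσ hq hX,
    show s = ε₁ + a by simp [hadef], Real.exp_add]
  rw [← hg1def, ← hg2def, ← hβdef]
  field_simp
  ring
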